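/- Let s ∈ ℂ with s ≠ 0 and let f = x³y³ + s·x·y + x ∈ ℂ[x,y] (the polynomial (xy)³ + s·xy + x of the paper's Example 8.1). Then the total Milnor number of f equals 1, i.e. dim_ℂ ℂ[x,y]/(∂f/∂x, ∂f/∂y) = dim_ℂ ℂ[x,y]/(3x²y³ + s·y + 1, 3x³y² + s·x) = 1. -/

import Mathlib

open MvPolynomial

noncomputable section

/-- The polynomial f = (xy)³ + s·xy + x of Example 8.1, as an element of ℂ[x,y]
    (variables: X 0 = x, X 1 = y). -/
def f₈₁ (s : ℂ) : MvPolynomial (Fin 2) ℂ :=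
  X 0 ^ 3 * X 1 ^ 3 + C s * (X 0 * X 1) + X 0

lemma pd0 (s : ℂ) : pderiv 0 (f₈₁ s) = 3 * X 0 ^ 2 * X 1 ^ 3 + C s * X 1 + 1 := by
  simp [f₈₁, pderiv_X, Fin.ext_iff]; ring

lemma pd1 (s : ℂ) : pderiv 1 (f₈₁ s) = 3 * X 0 ^ 3 * X 1 ^ 2 + C s * X 0 := by
  simp [f₈₁, pderiv_X, Fin.ext_iff]; ring

/-- for s ≠ 0, the total Milnor number of f = (xy)³ + s·xy + x equals 1,
    i.e. dim_ℂ ℂ[x,y]/(∂f/∂x, ∂f/∂y) = 1. -/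
theorem total_milnor_number_example81 (s : ℂ) (hs : s ≠ 0) :
    Module.finrank ℂ
      (MvPolynomial (Fin 2) ℂ ⧸
        Ideal.span {pderiv 0 (f₈₁ s), pderiv 1 (f₈₁ s)}) = 1 := by
  set I : Ideal (MvPolynomial (Fin 2) ℂ) :=
    Ideal.span {pderiv 0 (f₈₁ s), pderiv 1 (f₈₁ s)} with hI
  have hmem0 : pderiv 0 (f₈₁ s) ∈ I := Ideal.subset_span (by simp)
  have hmem1 : pderiv 1 (f₈₁ s) ∈ I := Ideal.subset_span (by simp)
  have hX0 : (X 0 : MvPolynomial (Fin 2) ℂ) ∈ I := by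
    have h : (X 0 : MvPolynomial (Fin 2) ℂ)
        = X 0 * pderiv 0 (f₈₁ s) - X 1 * pderiv 1 (f₈₁ s) := by
      rw [pd0, pd1]; ring
    rw [h]
    exact sub_mem (I.mul_mem_left _ hmem0) (I.mul_mem_left _ hmem1)
  have hY : (C s * X 1 + 1 : MvPolynomial (Fin 2) ℂ) ∈ I := by
    have h : (C s * X 1 + 1 : MvPolynomial (Fin 2) ℂ)
        = pderiv 0 (f₈₁ s) - (3 * X 0 * X 1 ^ 3) * X 0 := by
      rw [pd0]; ring
    rw [h]
    exact sub_mem hmem0 (I.mul_mem_left _ hX0)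
  have hCinv : (C s⁻¹ * C s : MvPolynomial (Fin 2) ℂ) = 1 := by
    rw [← C_mul, inv_mul_cancel₀ hs, C_1]
  have hX1 : (C (-s⁻¹) - X 1 : MvPolynomial (Fin 2) ℂ) ∈ I := by
    have h : (C (-s⁻¹) - X 1 : MvPolynomial (Fin 2) ℂ)
        = (-C s⁻¹) * (C s * X 1 + 1) := by
      rw [C_neg]
      linear_combination (X 1 : MvPolynomial (Fin 2) ℂ) * hCinv
    rw [h]
    exact I.mul_mem_left _ hY
  have hker : I ≤ RingHom.ker (aeval (R := ℂ) ![0, -s⁻¹]).toRingHom := by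
    rw [hI, Ideal.span_le]
    intro p hp
    simp only [Set.mem_insert_iff, Set.mem_singleton_iff] at hp
    rcases hp with rfl | rfl
    · simp only [SetLike.mem_coe, RingHom.mem_ker, AlgHom.toRingHom_eq_coe,
        RingHom.coe_coe]
      rw [pd0]
      simp
      field_simp
      norm_num
    · simp only [SetLike.mem_coe, RingHom.mem_ker, AlgHom.toRingHom_eq_coe,
        RingHom.coe_coe]
      rw [pd1]
      simp
  have hne : I ≠ ⊤ := by
    intro h
    have h1 : (1 : MvPolynomial (Fin 2) ℂ) ∈ I := h ▸ Submodule.mem_top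
    have := hker h1
    simp [RingHom.mem_ker] at this
  have : Nontrivial (MvPolynomial (Fin 2) ℂ ⧸ I) := Ideal.Quotient.nontrivial_iff.mpr hne
  have hrange : ∀ p : MvPolynomial (Fin 2) ℂ,
      Ideal.Quotient.mk I p ∈ (Algebra.ofId ℂ (MvPolynomial (Fin 2) ℂ ⧸ I)).range := by
    intro p
    induction p using MvPolynomial.induction_on with
    | C a =>
        refine ⟨a, ?_⟩
        rfl
    | add p q hp hq =>
        rw [map_add]; exact add_mem hp hq
    | mul_X p i hp =>
        rw [map_mul]
        refine mul_mem hp ?_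
        fin_cases i
        · refine ⟨0, ?_⟩
          have h0 : (Ideal.Quotient.mk I) (X 0) = 0 :=
            (Ideal.Quotient.eq_zero_iff_mem).2 hX0
          simpa using h0.symm
        · refine ⟨-s⁻¹, ?_⟩
          have h0 : (Ideal.Quotient.mk I) (C (-s⁻¹)) = (Ideal.Quotient.mk I) (X 1) :=
            (Ideal.Quotient.mk_eq_mk_iff_sub_mem _ _).2 (by simpa using hX1)
          exact h0
  have hsurj : Function.Surjective (Algebra.ofId ℂ (MvPolynomial (Fin 2) ℂ ⧸ I)) := by
    intro q
    obtain ⟨p, rfl⟩ := Ideal.Quotient.mk_surjective q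
    exact hrange p
  have hinj : Function.Injective (Algebra.ofId ℂ (MvPolynomial (Fin 2) ℂ ⧸ I)) :=
    (Algebra.ofId ℂ (MvPolynomial (Fin 2) ℂ ⧸ I)).toRingHom.injective
  have e := AlgEquiv.ofBijective (Algebra.ofId ℂ (MvPolynomial (Fin 2) ℂ ⧸ I)) ⟨hinj, hsurj⟩
  rw [← e.toLinearEquiv.finrank_eq, Module.finrank_self]
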